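/- Let R be a subset of density operators on a finite-dimensional Hilbert space ℋ such that only countably many of the sets R_P := {ρ ∈ R : supp-projection(ρ) = P}, where P ranges over orthogonal projections on ℋ, are nonempty. Then there exists a countable subset R̃ ⊆ R that is max-relative-entropy dense in R, i.e., for every ρ ∈ R and ε > 0 there exists ρ̃ ∈ R̃ with D∞(ρ̃‖ρ) < ε. -/

import Mathlib

open Matrix
open scoped ComplexOrder

/-- Max-relative entropy `D∞(ρ‖σ) := inf {λ : ρ ≤ e^λ σ}` (Löwner order), as an extended real
number (`+∞` if no such `λ` exists). -/
noncomputable def DmaxE {d : ℕ} (ρ σ : Matrix (Fin d) (Fin d) ℂ) : EReal :=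
  sInf ((fun l : ℝ => (l : EReal)) '' {l : ℝ | (Real.exp l • σ - ρ).PosSemidef})

/-- The support of a matrix, i.e. the range of the associated linear map. -/
noncomputable def supp {d : ℕ} (ρ : Matrix (Fin d) (Fin d) ℂ) :
    Submodule ℂ (Fin d → ℂ) :=
  LinearMap.range (Matrix.toLin' ρ)

attribute [local instance] Matrix.normedAddCommGroup

section Aux

lemma dot_self_re {d : ℕ} (x : Fin d → ℂ) : (star x ⬝ᵥ x).re = ∑ i, ‖x i‖ ^ 2 := by
  simp only [dotProduct, Pi.star_apply, Complex.re_sum]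
  congr 1; funext i
  rw [mul_comm]
  show (x i * (starRingEnd ℂ) (x i)).re = ‖x i‖ ^ 2
  rw [Complex.mul_conj]
  rw [Complex.normSq_eq_norm_sq]
  rw [Complex.ofReal_re]

lemma smul_form {d : ℕ} (M : Matrix (Fin d) (Fin d) ℂ) (a : ℝ) (x : Fin d → ℂ) :
    star (((a : ℂ)) • x) ⬝ᵥ M *ᵥ (((a : ℂ)) • x) = ((a ^ 2 : ℝ) : ℂ) * (star x ⬝ᵥ M *ᵥ x) := by
  simp [star_smul, Matrix.mulVec_smul, smul_dotProduct, dotProduct_smul,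
    smul_eq_mul]
  ring

lemma smul_dot_self {d : ℕ} (a : ℝ) (x : Fin d → ℂ) :
    star (((a : ℂ)) • x) ⬝ᵥ (((a : ℂ)) • x) = ((a ^ 2 : ℝ) : ℂ) * (star x ⬝ᵥ x) := by
  simpa using smul_form (1 : Matrix (Fin d) (Fin d) ℂ) a x

lemma dot_self_nonneg' {d : ℕ} (x : Fin d → ℂ) : 0 ≤ (star x ⬝ᵥ x).re := by
  rw [dot_self_re]
  exact Finset.sum_nonneg fun i _ => sq_nonneg _

lemma exists_proj {d : ℕ} (V : Submodule ℂ (Fin d → ℂ)) :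
    ∃ Q : Matrix (Fin d) (Fin d) ℂ, Qᴴ = Q ∧ (∀ x : Fin d → ℂ, x ∈ V → Q *ᵥ x = x) ∧
      (∀ x : Fin d → ℂ, Q *ᵥ x ∈ V) := by
  set W : Submodule ℂ (EuclideanSpace ℂ (Fin d)) :=
    V.comap (WithLp.linearEquiv 2 ℂ (Fin d → ℂ)).toLinearMap with hW
  set f : (Fin d → ℂ) →ₗ[ℂ] (Fin d → ℂ) :=
    (WithLp.linearEquiv 2 ℂ (Fin d → ℂ)).toLinearMap ∘ₗ
      (W.starProjection : EuclideanSpace ℂ (Fin d) →ₗ[ℂ] EuclideanSpace ℂ (Fin d)) ∘ₗ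
      (WithLp.linearEquiv 2 ℂ (Fin d → ℂ)).symm.toLinearMap with hf
  refine ⟨LinearMap.toMatrix' f, ?_, ?_, ?_⟩
  · have hsym : (Matrix.toEuclideanLin (LinearMap.toMatrix' f)).IsSymmetric := by
      have : Matrix.toEuclideanLin (LinearMap.toMatrix' f)
          = (W.starProjection : EuclideanSpace ℂ (Fin d) →ₗ[ℂ] EuclideanSpace ℂ (Fin d)) := by
        apply LinearMap.ext; intro x
        show WithLp.toLp 2 (Matrix.toLin' (LinearMap.toMatrix' f) (WithLp.ofLp x)) = _
        rw [Matrix.toLin'_toMatrix']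
        rfl
      rw [this]
      exact W.starProjection_isSymmetric
    exact Matrix.isHermitian_iff_isSymmetric.mpr hsym
  · intro x hx
    have : (LinearMap.toMatrix' f) *ᵥ x = f x := by
      rw [← Matrix.toLin'_apply, Matrix.toLin'_toMatrix']
    rw [this, hf]
    have hx' : WithLp.toLp 2 x ∈ W := hx
    show WithLp.ofLp (W.starProjection (WithLp.toLp 2 x)) = x
    rw [Submodule.starProjection_eq_self_iff.mpr hx']
  · intro x
    have : (LinearMap.toMatrix' f) *ᵥ x = f x := by
      rw [← Matrix.toLin'_apply, Matrix.toLin'_toMatrix']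
    rw [this]
    exact W.starProjection_apply_mem (WithLp.toLp 2 x)

lemma proj_fix {d : ℕ} {V : Submodule ℂ (Fin d → ℂ)}
    {Q M : Matrix (Fin d) (Fin d) ℂ}
    (hQ1 : ∀ x : Fin d → ℂ, x ∈ V → Q *ᵥ x = x) (hQH : Qᴴ = Q) (hM : Mᴴ = M)
    (hrange : ∀ x : Fin d → ℂ, M *ᵥ x ∈ V) : Q * M = M ∧ M * Q = M := by
  have h1 : Q * M = M := by
    apply Matrix.toLin'.injective
    apply LinearMap.ext; intro x
    show (Q * M) *ᵥ x = M *ᵥ x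
    rw [← Matrix.mulVec_mulVec]
    exact hQ1 _ (hrange x)
  refine ⟨h1, ?_⟩
  calc M * Q = (Qᴴ * Mᴴ)ᴴ := by rw [Matrix.conjTranspose_mul, Matrix.conjTranspose_conjTranspose,
        Matrix.conjTranspose_conjTranspose]
    _ = M := by rw [hQH, hM, h1, hM]

lemma continuous_form {d : ℕ} (M : Matrix (Fin d) (Fin d) ℂ) :
    Continuous fun x : Fin d → ℂ => (star x ⬝ᵥ M *ᵥ x).re := by
  apply Complex.continuous_re.comp
  show Continuous fun x : Fin d → ℂ => ∑ i, star (x i) * (∑ j, M i j * x j)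
  apply continuous_finset_sum; intro i _
  exact (continuous_star.comp (continuous_apply i)).mul
    (continuous_finset_sum _ fun j _ => continuous_const.mul (continuous_apply j))

lemma exists_lam {d : ℕ} {ρ : Matrix (Fin d) (Fin d) ℂ} (hρ : ρ.PosSemidef) (hρ0 : ρ ≠ 0) :
    ∃ lam : ℝ, 0 < lam ∧ ∀ x : Fin d → ℂ, x ∈ supp ρ →
      lam * (star x ⬝ᵥ x).re ≤ (star x ⬝ᵥ ρ *ᵥ x).re := by
  classical
  set g : (Fin d → ℂ) → ℝ := fun x => (star x ⬝ᵥ ρ *ᵥ x).re with hgdef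
  have hg : Continuous g := continuous_form ρ
  have hn : Continuous fun x : Fin d → ℂ => (star x ⬝ᵥ x).re := by
    simpa using continuous_form (1 : Matrix (Fin d) (Fin d) ℂ)
  set S : Set (Fin d → ℂ) := {x | x ∈ supp ρ ∧ (star x ⬝ᵥ x).re = 1} with hSdef
  have hScl : IsClosed S := by
    have h1 : IsClosed ((supp ρ : Set (Fin d → ℂ))) := Submodule.closed_of_finiteDimensional _
    have h2 : IsClosed {x : Fin d → ℂ | (star x ⬝ᵥ x).re = 1} :=
      isClosed_eq hn continuous_const
    exact h1.inter h2
  have hSbd : Bornology.IsBounded S := by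
    rw [Metric.isBounded_iff_subset_closedBall 0]
    refine ⟨1, fun x hx => ?_⟩
    simp only [Metric.mem_closedBall, dist_zero_right]
    rw [pi_norm_le_iff_of_nonneg zero_le_one]
    intro i
    have h1 : ‖x i‖ ^ 2 ≤ 1 := by
      have := hx.2
      rw [dot_self_re] at this
      rw [← this]
      exact Finset.single_le_sum (f := fun k => ‖x k‖ ^ 2) (fun j _ => sq_nonneg _)
        (Finset.mem_univ i)
    nlinarith [norm_nonneg (x i)]
  have hScompact : IsCompact S := Metric.isCompact_of_isClosed_isBounded hScl hSbd
  have hVne : supp ρ ≠ ⊥ := by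
    intro h
    apply hρ0
    have : Matrix.toLin' ρ = 0 := LinearMap.range_eq_bot.mp h
    have := congrArg Matrix.toLin'.symm this
    simpa using this
  obtain ⟨x0, hx0V, hx00⟩ := Submodule.exists_mem_ne_zero_of_ne_bot hVne
  have hnx0 : 0 < (star x0 ⬝ᵥ x0).re := by
    rw [dot_self_re]
    obtain ⟨i, hi⟩ : ∃ i, x0 i ≠ 0 := by
      by_contra h; push_neg at h; exact hx00 (funext h)
    exact Finset.sum_pos' (fun j _ => sq_nonneg _)
      ⟨i, Finset.mem_univ i, pow_pos (norm_pos_iff.mpr hi) 2⟩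
  set c0 : ℝ := Real.sqrt ((star x0 ⬝ᵥ x0).re) with hc0
  have hc0pos : 0 < c0 := Real.sqrt_pos.mpr hnx0
  have hc0sq : c0 ^ 2 = (star x0 ⬝ᵥ x0).re := Real.sq_sqrt hnx0.le
  have hx1S : (((c0⁻¹ : ℝ) : ℂ) • x0) ∈ S := by
    constructor
    · exact Submodule.smul_mem _ _ hx0V
    · rw [smul_dot_self, Complex.re_ofReal_mul, inv_pow, hc0sq]
      exact inv_mul_cancel₀ hnx0.ne'
  obtain ⟨xm, hxmS, hmin⟩ := hScompact.exists_isMinOn ⟨_, hx1S⟩ hg.continuousOn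
  set lam : ℝ := g xm with hlam
  have hq := hρ.dotProduct_mulVec_nonneg xm
  have hqre : 0 ≤ lam := by
    have := (Complex.le_def.mp hq).1
    simpa using this
  have hlampos : 0 < lam := by
    rcases hqre.lt_or_eq with h | h
    · exact h
    · exfalso
      have hq0 : star xm ⬝ᵥ ρ *ᵥ xm = 0 := by
        apply Complex.ext
        · simpa using h.symm
        · have := (Complex.le_def.mp hq).2
          simpa using this.symm
      have hmv : ρ *ᵥ xm = 0 := (hρ.dotProduct_mulVec_zero_iff xm).mp hq0
      obtain ⟨y, hy⟩ := hxmS.1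
      rw [Matrix.toLin'_apply] at hy
      have hrow : star xm ᵥ* ρ = 0 := by
        have h1 : star (ρ *ᵥ xm) = star xm ᵥ* ρᴴ := Matrix.star_mulVec ρ xm
        rw [hmv, hρ.1] at h1
        simpa using h1.symm
      have : star xm ⬝ᵥ xm = 0 := by
        calc star xm ⬝ᵥ xm = star xm ⬝ᵥ (ρ *ᵥ y) := by rw [hy]
          _ = (star xm ᵥ* ρ) ⬝ᵥ y := Matrix.dotProduct_mulVec _ _ _
          _ = 0 := by rw [hrow, zero_dotProduct]
      have h1 := hxmS.2
      rw [this] at h1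
      simpa using h1
  refine ⟨lam, hlampos, fun x hxV => ?_⟩
  rcases eq_or_ne x 0 with rfl | hx0
  · simp
  have hnx : 0 < (star x ⬝ᵥ x).re := by
    rw [dot_self_re]
    obtain ⟨i, hi⟩ : ∃ i, x i ≠ 0 := by
      by_contra h; push_neg at h; exact hx0 (funext h)
    exact Finset.sum_pos' (fun j _ => sq_nonneg _)
      ⟨i, Finset.mem_univ i, pow_pos (norm_pos_iff.mpr hi) 2⟩
  set c : ℝ := Real.sqrt ((star x ⬝ᵥ x).re) with hc
  have hcpos : 0 < c := Real.sqrt_pos.mpr hnx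
  have hcsq : c ^ 2 = (star x ⬝ᵥ x).re := Real.sq_sqrt hnx.le
  set x' : Fin d → ℂ := ((c⁻¹ : ℝ) : ℂ) • x with hx'
  have hx'S : x' ∈ S := by
    constructor
    · exact Submodule.smul_mem _ _ hxV
    · rw [hx', smul_dot_self, Complex.re_ofReal_mul, inv_pow, hcsq]
      exact inv_mul_cancel₀ hnx.ne'
  have hxeq : ((c : ℝ) : ℂ) • x' = x := by
    rw [hx', smul_smul, ← Complex.ofReal_mul, mul_inv_cancel₀ hcpos.ne']
    simp
  have hqx : (star x ⬝ᵥ ρ *ᵥ x).re = c ^ 2 * g x' := by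
    conv_lhs => rw [← hxeq]
    rw [smul_form, Complex.re_ofReal_mul]
  have hgx' : lam ≤ g x' := hmin hx'S
  rw [hqx, ← hcsq]
  calc lam * c ^ 2 = c ^ 2 * lam := by ring
    _ ≤ c ^ 2 * g x' := by
        apply mul_le_mul_of_nonneg_left hgx' (sq_nonneg c)

lemma form_upper_bound {d : ℕ} (Δ : Matrix (Fin d) (Fin d) ℂ) (x : Fin d → ℂ) :
    (star x ⬝ᵥ Δ *ᵥ x).re ≤ (∑ i, ∑ j, ‖Δ i j‖) * (star x ⬝ᵥ x).re := by
  have habs : ‖star x ⬝ᵥ Δ *ᵥ x‖ ≤ (∑ i, ∑ j, ‖Δ i j‖) * (star x ⬝ᵥ x).re := by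
    have h1 : ‖star x ⬝ᵥ Δ *ᵥ x‖ ≤ ∑ i, ∑ j, ‖Δ i j‖ * (‖x i‖ * ‖x j‖) := by
      calc ‖star x ⬝ᵥ Δ *ᵥ x‖
          = ‖∑ i, ∑ j, star (x i) * (Δ i j * x j)‖ := by
            congr 1
            simp [dotProduct, mulVec, Finset.mul_sum]
        _ ≤ ∑ i, ‖∑ j, star (x i) * (Δ i j * x j)‖ := by
            exact norm_sum_le _ _
        _ ≤ ∑ i, ∑ j, ‖star (x i) * (Δ i j * x j)‖ := by
            exact Finset.sum_le_sum fun i _ => norm_sum_le _ _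
        _ = ∑ i, ∑ j, ‖Δ i j‖ * (‖x i‖ * ‖x j‖) := by
            congr 1; funext i; congr 1; funext j
            rw [show star (x i) = (starRingEnd ℂ) (x i) from rfl, norm_mul,
              norm_mul, Complex.norm_conj]
            ring
    refine h1.trans ?_
    rw [Finset.sum_mul]
    refine Finset.sum_le_sum fun i _ => ?_
    rw [Finset.sum_mul]
    refine Finset.sum_le_sum fun j _ => ?_
    refine mul_le_mul_of_nonneg_left ?_ (norm_nonneg _)
    rw [dot_self_re]
    have hi : ‖x i‖ ^ 2 ≤ ∑ k, ‖x k‖ ^ 2 :=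
      Finset.single_le_sum (f := fun k => ‖x k‖ ^ 2) (fun k _ => sq_nonneg _) (Finset.mem_univ i)
    have hj : ‖x j‖ ^ 2 ≤ ∑ k, ‖x k‖ ^ 2 :=
      Finset.single_le_sum (f := fun k => ‖x k‖ ^ 2) (fun k _ => sq_nonneg _) (Finset.mem_univ j)
    nlinarith [norm_nonneg (x i), norm_nonneg (x j), sq_nonneg (‖x i‖ - ‖x j‖),
      Finset.sum_nonneg (fun k (_ : k ∈ Finset.univ) => sq_nonneg ‖x k‖)]
  have h5 := Complex.abs_re_le_norm (star x ⬝ᵥ Δ *ᵥ x)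
  have h6 := le_abs_self (star x ⬝ᵥ Δ *ᵥ x).re
  linarith

lemma herm_form_im {d : ℕ} {M : Matrix (Fin d) (Fin d) ℂ} (hM : Mᴴ = M) (x : Fin d → ℂ) :
    (star x ⬝ᵥ M *ᵥ x).im = 0 := by
  have h1 : (starRingEnd ℂ) (star x ⬝ᵥ M *ᵥ x) = star x ⬝ᵥ M *ᵥ x := by
    have h2 : star (star x ⬝ᵥ M *ᵥ x) = star (M *ᵥ x) ⬝ᵥ x := by
      rw [Matrix.star_dotProduct]
      simp
    rw [show ((starRingEnd ℂ) (star x ⬝ᵥ M *ᵥ x)) = star (star x ⬝ᵥ M *ᵥ x) from rfl, h2,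
      Matrix.star_mulVec, ← Matrix.dotProduct_mulVec, hM]
  exact Complex.conj_eq_iff_im.mp h1

lemma core {d : ℕ} {ρ : Matrix (Fin d) (Fin d) ℂ} (hρ : ρ.PosSemidef) (hρ0 : ρ ≠ 0)
    {l : ℝ} (hl : 0 < l) :
    ∃ δ : ℝ, 0 < δ ∧ ∀ ρt : Matrix (Fin d) (Fin d) ℂ, ρt.PosSemidef → supp ρt = supp ρ →
      (∑ i, ∑ j, ‖(ρt - ρ) i j‖) < δ → (Real.exp l • ρ - ρt).PosSemidef := by
  obtain ⟨lam, hlam, hlb⟩ := exists_lam hρ hρ0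
  have hexp : 0 < Real.exp l - 1 := sub_pos.mpr (Real.one_lt_exp_iff.mpr hl)
  refine ⟨(Real.exp l - 1) * lam, mul_pos hexp hlam, ?_⟩
  intro ρt hρt hsupp hclose
  set V : Submodule ℂ (Fin d → ℂ) := supp ρ with hV
  obtain ⟨Q, hQH, hQ1, hQ2⟩ := exists_proj V
  have hρ_range : ∀ x : Fin d → ℂ, ρ *ᵥ x ∈ V := fun x => ⟨x, Matrix.toLin'_apply ρ x⟩
  have hρt_range : ∀ x : Fin d → ℂ, ρt *ᵥ x ∈ V := by
    intro x
    have : ρt *ᵥ x ∈ supp ρt := ⟨x, Matrix.toLin'_apply ρt x⟩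
    rw [hsupp] at this; exact this
  obtain ⟨hQρ, hρQ⟩ := proj_fix hQ1 hQH hρ.1 hρ_range
  obtain ⟨hQρt, hρtQ⟩ := proj_fix hQ1 hQH hρt.1 hρt_range
  set M : Matrix (Fin d) (Fin d) ℂ := Real.exp l • ρ - ρt with hM
  have hMsmul : Real.exp l • ρ = ((Real.exp l : ℝ) : ℂ) • ρ := by
    ext i j; simp [Complex.real_smul]
  have hstar : star ((Real.exp l : ℝ) : ℂ) = ((Real.exp l : ℝ) : ℂ) := Complex.conj_ofReal _
  have hMH : Mᴴ = M := by
    rw [hM, Matrix.conjTranspose_sub, hMsmul, Matrix.conjTranspose_smul, hstar, hρ.1, hρt.1]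
  have hQMQ : Q * M * Q = M := by
    rw [hM, hMsmul]
    rw [Matrix.mul_sub, Matrix.sub_mul, Matrix.mul_smul, Matrix.smul_mul, hQρ, hρQ, hQρt, hρtQ]
  refine Matrix.PosSemidef.of_dotProduct_mulVec_nonneg hMH (fun x => ?_)
  set y : Fin d → ℂ := Q *ᵥ x with hy
  have hyV : y ∈ V := hQ2 x
  have hsy : star x ᵥ* Q = star y := by rw [hy, Matrix.star_mulVec, hQH]
  have hform : star x ⬝ᵥ M *ᵥ x = star y ⬝ᵥ M *ᵥ y := by
    calc star x ⬝ᵥ M *ᵥ x = star x ⬝ᵥ (Q * (M * Q)) *ᵥ x := by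
          rw [← Matrix.mul_assoc, hQMQ]
      _ = star x ⬝ᵥ Q *ᵥ ((M * Q) *ᵥ x) := by rw [Matrix.mulVec_mulVec]
      _ = (star x ᵥ* Q) ⬝ᵥ ((M * Q) *ᵥ x) := Matrix.dotProduct_mulVec _ _ _
      _ = star y ⬝ᵥ M *ᵥ y := by rw [hsy, ← Matrix.mulVec_mulVec, ← hy]
  have him : (star x ⬝ᵥ M *ᵥ x).im = 0 := herm_form_im hMH x
  have hre : 0 ≤ (star x ⬝ᵥ M *ᵥ x).re := by
    rw [hform]
    have hsplit : star y ⬝ᵥ M *ᵥ y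
        = ((Real.exp l : ℝ) : ℂ) * (star y ⬝ᵥ ρ *ᵥ y) - star y ⬝ᵥ ρt *ᵥ y := by
      rw [hM, hMsmul, Matrix.sub_mulVec, dotProduct_sub, Matrix.smul_mulVec,
        dotProduct_smul, smul_eq_mul]
    have hΔ : star y ⬝ᵥ ρt *ᵥ y = star y ⬝ᵥ ρ *ᵥ y + star y ⬝ᵥ (ρt - ρ) *ᵥ y := by
      rw [Matrix.sub_mulVec, dotProduct_sub]; ring
    rw [hsplit, hΔ]
    simp only [Complex.sub_re, Complex.add_re, Complex.re_ofReal_mul]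
    have h1 := hlb y hyV
    have h2 := form_upper_bound (ρt - ρ) y
    have h3 := dot_self_nonneg' y
    have h4 : (∑ i, ∑ j, ‖(ρt - ρ) i j‖) * (star y ⬝ᵥ y).re
        ≤ ((Real.exp l - 1) * lam) * (star y ⬝ᵥ y).re := by
      apply mul_le_mul_of_nonneg_right hclose.le h3
    have h5 := mul_le_mul_of_nonneg_left h1 hexp.le
    nlinarith
  rw [Complex.le_def]
  constructor
  · simpa using hre
  · simp [him]

lemma dense_subset {d : ℕ} (A : Set (Matrix (Fin d) (Fin d) ℂ)) :
    ∃ D ⊆ A, D.Countable ∧ ∀ a ∈ A, ∀ r : ℝ, 0 < r → ∃ b ∈ D, dist b a < r := by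
  haveI : SecondCountableTopology (Matrix (Fin d) (Fin d) ℂ) :=
    inferInstanceAs (SecondCountableTopology (Fin d → Fin d → ℂ))
  haveI : TopologicalSpace.SeparableSpace A := by infer_instance
  obtain ⟨s, hsc, hsd⟩ := TopologicalSpace.exists_countable_dense A
  refine ⟨Subtype.val '' s, by simp, hsc.image _, fun a ha r hr => ?_⟩
  obtain ⟨⟨b, hbA⟩, hbs, hbd⟩ := Metric.dense_iff.mp hsd ⟨a, ha⟩ r hr
  refine ⟨b, Set.mem_image_of_mem _ hbd, ?_⟩
  have : dist (⟨b, hbA⟩ : A) ⟨a, ha⟩ < r := by simpa [Metric.mem_ball] using hbs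
  simpa [Subtype.dist_eq] using this

lemma entry_sum_le {d : ℕ} (Δ : Matrix (Fin d) (Fin d) ℂ) :
    (∑ i, ∑ j, ‖Δ i j‖) ≤ (d ^ 2 : ℝ) * ‖Δ‖ := by
  calc (∑ i, ∑ j, ‖Δ i j‖) ≤ ∑ _i : Fin d, ∑ _j : Fin d, ‖Δ‖ := by
        refine Finset.sum_le_sum fun i _ => Finset.sum_le_sum fun j _ => ?_
        exact Matrix.norm_entry_le_entrywise_sup_norm Δ
    _ = (d ^ 2 : ℝ) * ‖Δ‖ := by simp [Finset.sum_const]; ring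

end Aux

theorem stmt3 {d : ℕ} (R : Set (Matrix (Fin d) (Fin d) ℂ))
    (hR : ∀ ρ ∈ R, ρ.PosSemidef ∧ ρ.trace = 1)
    (hcount : Set.Countable {V : Submodule ℂ (Fin d → ℂ) | ∃ ρ ∈ R, supp ρ = V}) :
    ∃ Rt ⊆ R, Rt.Countable ∧
      ∀ ρ ∈ R, ∀ ε : ℝ, 0 < ε → ∃ ρt ∈ Rt, DmaxE ρt ρ < (ε : EReal) := by
  classical
  have hdense := fun V : Submodule ℂ (Fin d → ℂ) =>
    dense_subset {ρ | ρ ∈ R ∧ supp ρ = V}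
  choose D hDsub hDcount hDdense using hdense
  refine ⟨⋃ V ∈ {V : Submodule ℂ (Fin d → ℂ) | ∃ ρ ∈ R, supp ρ = V}, D V, ?_, ?_, ?_⟩
  · refine Set.iUnion₂_subset fun V _ => (hDsub V).trans ?_
    intro x hx; exact hx.1
  · exact hcount.biUnion fun V _ => hDcount V
  · intro ρ hρR ε hε
    obtain ⟨hρPSD, hρtr⟩ := hR ρ hρR
    have hρ0 : ρ ≠ 0 := by
      rintro rfl
      rw [Matrix.trace_zero] at hρtr
      exact one_ne_zero hρtr.symm
    obtain ⟨δ, hδ, hcore⟩ := core hρPSD hρ0 (half_pos hε)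
    set r : ℝ := δ / (d ^ 2 + 1) with hr
    have hrpos : 0 < r := div_pos hδ (by positivity)
    obtain ⟨b, hbD, hbdist⟩ := hDdense (supp ρ) ρ ⟨hρR, rfl⟩ r hrpos
    obtain ⟨hbR, hbsupp⟩ := hDsub _ hbD
    have hbPSD := (hR b hbR).1
    have hsum : (∑ i, ∑ j, ‖(b - ρ) i j‖) < δ := by
      have h1 := entry_sum_le (b - ρ)
      have h2 : ‖b - ρ‖ = dist b ρ := dist_eq_norm b ρ |>.symm
      have h3 : (d ^ 2 : ℝ) * dist b ρ ≤ (d ^ 2 : ℝ) * r :=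
        mul_le_mul_of_nonneg_left hbdist.le (by positivity)
      have h4 : (d ^ 2 : ℝ) * r < δ := by
        rw [hr, ← mul_div_assoc, div_lt_iff₀ (by positivity : (0:ℝ) < (d:ℝ) ^ 2 + 1)]
        nlinarith
      rw [h2] at h1
      linarith
    have hPSD := hcore b hbPSD hbsupp hsum
    have hmem : ((ε / 2 : ℝ) : EReal) ∈
        (fun l : ℝ => (l : EReal)) '' {l : ℝ | (Real.exp l • ρ - b).PosSemidef} :=
      ⟨ε / 2, hPSD, rfl⟩
    refine ⟨b, ?_, ?_⟩
    · exact Set.mem_biUnion ⟨ρ, hρR, rfl⟩ hbD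
    · refine lt_of_le_of_lt (sInf_le hmem) ?_
      exact_mod_cast half_lt_self hε
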